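/- Let X be a normal topological space with Lebesgue covering dimension at most n. For any continuous map f : X → ℝ^{n+1} and any continuous function ε : X → ℝ with ε(x) > 0 for all x, there exists a continuous map g : X → ℝ^{n+1} such that for all x ∈ X, ‖g(x) − f(x)‖ < ε(x) and g(x) ≠ 0. -/

import Mathlib

set_option maxHeartbeats 1000000
set_option synthInstance.maxHeartbeats 1000000


open MeasureTheory

lemma avoid_spans (n m : ℕ) (w : Fin m → EuclideanSpace ℝ (Fin (n+1)))
    (c : EuclideanSpace ℝ (Fin (n+1))) {ρ : ℝ} (hρ : 0 < ρ) :
    ∃ x : EuclideanSpace ℝ (Fin (n+1)), dist x c < ρ ∧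
      ∀ S : Finset (Fin m), S.card ≤ n →
        x ∉ Submodule.span ℝ (w '' (S : Set (Fin m))) := by
  classical
  have hspan : ∀ S : Finset (Fin m), S.card ≤ n →
      (volume : Measure (EuclideanSpace ℝ (Fin (n+1)))) (Submodule.span ℝ (w '' (S : Set (Fin m)))) = 0 := by
    intro S hS
    apply Measure.addHaar_submodule
    intro htop
    have h1 : Module.finrank ℝ (Submodule.span ℝ (w '' (S : Set (Fin m)))) ≤ n := by
      have := finrank_span_le_card (R := ℝ) (w '' (S : Set (Fin m)))
      refine this.trans ?_
      calc (w '' (S : Set (Fin m))).toFinset.card = (S.image w).card := by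
            congr 1; ext y; simp
        _ ≤ S.card := Finset.card_image_le
        _ ≤ n := hS
    rw [htop] at h1
    have h2 : Module.finrank ℝ (⊤ : Submodule ℝ (EuclideanSpace ℝ (Fin (n+1)))) = n + 1 := by
      rw [finrank_top]; simp
    omega
  have hball : 0 < (volume : Measure (EuclideanSpace ℝ (Fin (n+1)))) (Metric.ball c ρ) := Metric.measure_ball_pos _ _ hρ
  have hU : (volume : Measure (EuclideanSpace ℝ (Fin (n+1)))) (⋃ S ∈ {S : Finset (Fin m) | S.card ≤ n},
      (Submodule.span ℝ (w '' (S : Set (Fin m))) : Set (EuclideanSpace ℝ (Fin (n+1))))) = 0 := by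
    refine (measure_biUnion_null_iff (Set.to_countable _)).2 ?_
    intro S hS; exact hspan S hS
  by_contra hcon
  push_neg at hcon
  have hsub : Metric.ball c ρ ⊆ ⋃ S ∈ {S : Finset (Fin m) | S.card ≤ n},
      (Submodule.span ℝ (w '' (S : Set (Fin m))) : Set (EuclideanSpace ℝ (Fin (n+1)))) := by
    intro x hx
    obtain ⟨S, hS1, hS2⟩ := hcon x (by rwa [Metric.mem_ball] at hx)
    exact Set.mem_biUnion hS1 hS2
  have h3 := measure_mono_null hsub hU
  exact absurd h3 (ne_of_gt hball)

noncomputable def gp (n : ℕ) (d : ℕ → EuclideanSpace ℝ (Fin (n+1))) (r : ℕ → ℝ)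
    (hr : ∀ k, 0 < r k) : ℕ → EuclideanSpace ℝ (Fin (n+1))
  | k => Classical.choose (avoid_spans n k (fun j : Fin k => gp n d r hr j) (d k) (hr k))
termination_by k => k
decreasing_by all_goals exact j.isLt

lemma gp_spec (n : ℕ) (d : ℕ → EuclideanSpace ℝ (Fin (n+1))) (r : ℕ → ℝ)
    (hr : ∀ k, 0 < r k) (k : ℕ) :
    dist (gp n d r hr k) (d k) < r k ∧
      ∀ S : Finset (Fin k), S.card ≤ n →
        gp n d r hr k ∉ Submodule.span ℝ ((fun j : Fin k => gp n d r hr j) '' (S : Set (Fin k))) := by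
  rw [gp]
  exact Classical.choose_spec (avoid_spans n k (fun j : Fin k => gp n d r hr j) (d k) (hr k))

lemma gp_indep (n : ℕ) (d : ℕ → EuclideanSpace ℝ (Fin (n+1))) (r : ℕ → ℝ)
    (hr : ∀ k, 0 < r k) (N : ℕ) :
    ∀ T : Finset ℕ, T.card = N → N ≤ n + 1 → ∀ c : ℕ → ℝ,
      ∑ k ∈ T, c k • gp n d r hr k = 0 → ∀ k ∈ T, c k = 0 := by
  classical
  induction N with
  | zero =>
    intro T hT _ c _ k hk
    rw [Finset.card_eq_zero] at hT
    simp [hT] at hk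
  | succ N ih =>
    intro T hT hN c hsum k hk
    have hne : T.Nonempty := Finset.card_pos.mp (by omega)
    set m := T.max' hne with hm
    have hmT : m ∈ T := T.max'_mem hne
    set T' := T.erase m with hT'def
    have hT'card : T'.card = N := by
      rw [hT'def, Finset.card_erase_of_mem hmT, hT]
      omega
    have hlt : ∀ j ∈ T', j < m := fun j hj =>
      lt_of_le_of_ne (T.le_max' j (Finset.mem_of_mem_erase hj)) (Finset.ne_of_mem_erase hj)
    have hsum' : c m • gp n d r hr m + ∑ j ∈ T', c j • gp n d r hr j = 0 := by
      rw [hT'def, Finset.add_sum_erase T (fun j => c j • gp n d r hr j) hmT]; exact hsum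
    have hcm : c m = 0 := by
      by_contra hc
      set S : Finset (Fin m) := T'.attachFin hlt with hSdef
      have hScard : S.card ≤ n := by
        have : S.card = T'.card := Finset.card_attachFin _ _
        omega
      have hsm : ∑ j ∈ T', c j • gp n d r hr j ∈
          Submodule.span ℝ ((fun j : Fin m => gp n d r hr j) '' (S : Set (Fin m))) := by
        apply Submodule.sum_smul_mem
        intro j hj
        apply Submodule.subset_span
        exact ⟨⟨j, hlt j hj⟩, by simpa [hSdef, Finset.mem_attachFin] using hj, rfl⟩
      have hmem : gp n d r hr m ∈
          Submodule.span ℝ ((fun j : Fin m => gp n d r hr j) '' (S : Set (Fin m))) := by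
        have h6 : -(∑ j ∈ T', c j • gp n d r hr j) = c m • gp n d r hr m := by
          exact neg_eq_of_add_eq_zero_left hsum'
        have h5 : gp n d r hr m = (c m)⁻¹ • (-(∑ j ∈ T', c j • gp n d r hr j)) := by
          rw [h6, inv_smul_smul₀ hc]
        rw [h5]
        exact Submodule.smul_mem _ _ (Submodule.neg_mem _ hsm)
      exact (gp_spec n d r hr m).2 S hScard hmem
    have hsum'' : ∑ j ∈ T', c j • gp n d r hr j = 0 := by
      rw [hcm] at hsum'; simpa using hsum'
    rcases eq_or_ne k m with hkm | hkm
    · rw [hkm]; exact hcm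
    · exact ih T' hT'card (by omega) c hsum'' k (Finset.mem_erase.mpr ⟨hkm, hk⟩)




/-- Covering dimension at most `n`: every open cover has an open refinement in which
each point lies in at most `n + 1` members. -/
def CovDimLE (X : Type) [TopologicalSpace X] (n : ℕ) : Prop :=
  ∀ 𝒰 : Set (Set X), (∀ U ∈ 𝒰, IsOpen U) → ⋃₀ 𝒰 = Set.univ →
    ∃ 𝒱 : Set (Set X), (∀ V ∈ 𝒱, IsOpen V) ∧ ⋃₀ 𝒱 = Set.univ ∧
      (∀ V ∈ 𝒱, ∃ U ∈ 𝒰, V ⊆ U) ∧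
      ∀ x : X, {V ∈ 𝒱 | x ∈ V}.Finite ∧ {V ∈ 𝒱 | x ∈ V}.ncard ≤ n + 1

theorem stmt_0 (n : ℕ) (X : Type) [TopologicalSpace X] [NormalSpace X]
    (hdim : CovDimLE X n)
    (f : X → EuclideanSpace ℝ (Fin (n + 1))) (hf : Continuous f)
    (ε : X → ℝ) (hε : Continuous ε) (hεpos : ∀ x, 0 < ε x) :
    ∃ g : X → EuclideanSpace ℝ (Fin (n + 1)), Continuous g ∧
      ∀ x, ‖g x - f x‖ < ε x ∧ g x ≠ 0 := by
  classical
  -- countable dense set in the target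
  obtain ⟨D0, hD0c, hD0d⟩ :=
    TopologicalSpace.exists_countable_dense (EuclideanSpace ℝ (Fin (n + 1)))
  obtain ⟨dfun, hdfun⟩ := hD0c.exists_eq_range (hD0d.nonempty)
  -- enumeration of positive rationals
  set qfun : ℕ → ℝ := fun m => ((m.unpair.1 + 1 : ℕ) : ℝ) / ((m.unpair.2 + 1 : ℕ) : ℝ)
    with hqfun
  have hqpos : ∀ m, 0 < qfun m := by
    intro m; rw [hqfun]; positivity
  have hqdense : ∀ t : ℝ, 0 < t → ∃ m, qfun m < t := by
    intro t ht
    obtain ⟨ρ, hρ0, hρt⟩ := exists_rat_btwn ht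
    have hρ0' : 0 < ρ := by exact_mod_cast hρ0
    have hnum : 1 ≤ ρ.num.toNat := by
      have := Rat.num_pos.mpr hρ0'; omega
    have hden : 1 ≤ ρ.den := ρ.pos
    refine ⟨Nat.pair (ρ.num.toNat - 1) (ρ.den - 1), ?_⟩
    have h1 : qfun (Nat.pair (ρ.num.toNat - 1) (ρ.den - 1)) = (ρ : ℝ) := by
      rw [hqfun]
      simp only [Nat.unpair_pair]
      have e1 : ρ.num.toNat - 1 + 1 = ρ.num.toNat := by omega
      have e2 : ρ.den - 1 + 1 = ρ.den := by omega
      rw [e1, e2, Rat.cast_def]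
      congr 1
      have : (ρ.num.toNat : ℤ) = ρ.num := Int.toNat_of_nonneg (le_of_lt (Rat.num_pos.mpr hρ0'))
      exact_mod_cast congrArg (fun z : ℤ => (z : ℝ)) this
    rw [h1]; exact hρt
  -- index data
  set dk : ℕ → EuclideanSpace ℝ (Fin (n + 1)) := fun k => dfun k.unpair.1 with hdk
  set qk : ℕ → ℝ := fun k => qfun k.unpair.2 with hqk
  have hqkpos : ∀ k, 0 < qk k := fun k => hqpos _
  -- the basic countable cover
  set U : ℕ → Set X := fun k => {x | ‖f x - dk k‖ < qk k / 8 ∧ qk k < ε x} with hU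
  have hUopen : ∀ k, IsOpen (U k) := by
    intro k
    apply IsOpen.inter
    · exact isOpen_lt ((hf.sub continuous_const).norm) continuous_const
    · exact isOpen_lt continuous_const hε
  have hUcover : ∀ x, ∃ k, x ∈ U k := by
    intro x
    obtain ⟨m2, hm2⟩ := hqdense (ε x) (hεpos x)
    have h8 : 0 < qfun m2 / 8 := by have := hqpos m2; linarith
    obtain ⟨y, hyD, hy⟩ := hD0d.exists_dist_lt (f x) h8
    rw [hdfun] at hyD
    obtain ⟨m1, rfl⟩ := hyD
    refine ⟨Nat.pair m1 m2, ?_, ?_⟩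
    · show ‖f x - dk (Nat.pair m1 m2)‖ < qk (Nat.pair m1 m2) / 8
      rw [hdk, hqk]
      simp only [Nat.unpair_pair]
      rw [← dist_eq_norm]
      exact hy
    · show qk (Nat.pair m1 m2) < ε x
      rw [hqk]; simp only [Nat.unpair_pair]; exact hm2
  -- apply the dimension hypothesis
  obtain ⟨𝒱, hVopen, hVcover, hVref, hVfin⟩ := hdim (Set.range U)
    (by rintro _ ⟨k, rfl⟩; exact hUopen k)
    (by
      ext x; simp only [Set.mem_sUnion, Set.mem_univ, iff_true]
      obtain ⟨k, hk⟩ := hUcover x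
      exact ⟨U k, Set.mem_range_self k, hk⟩)
  have hex : ∀ V ∈ 𝒱, ∃ k, V ⊆ U k := by
    intro V hV
    obtain ⟨U', hU', hVU⟩ := hVref V hV
    obtain ⟨k, rfl⟩ := hU'
    exact ⟨k, hVU⟩
  set idx : Set X → ℕ := fun V => if h : ∃ k, V ⊆ U k then Nat.find h else 0 with hidxdef
  have hidx : ∀ V ∈ 𝒱, V ⊆ U (idx V) := by
    intro V hV
    have h := hex V hV
    have heq : idx V = Nat.find h := dif_pos h
    rw [heq]
    exact Nat.find_spec h
  set W : ℕ → Set X := fun k => ⋃₀ {V | V ∈ 𝒱 ∧ idx V = k} with hWdef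
  have hWopen : ∀ k, IsOpen (W k) := by
    intro k
    apply isOpen_sUnion
    rintro V ⟨hV, -⟩
    exact hVopen V hV
  have hWsub : ∀ k, W k ⊆ U k := by
    rintro k x ⟨V, ⟨hV, hidxV⟩, hxV⟩
    exact hidxV ▸ hidx V hV hxV
  have hWcover : ∀ x, ∃ k, x ∈ W k := by
    intro x
    have : x ∈ ⋃₀ 𝒱 := by rw [hVcover]; trivial
    obtain ⟨V, hV, hxV⟩ := this
    exact ⟨idx V, V, ⟨hV, rfl⟩, hxV⟩
  -- multiplicity of the W-cover
  have hWfin : ∀ x : X, {k | x ∈ W k}.Finite ∧ {k | x ∈ W k}.ncard ≤ n + 1 := by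
    intro x
    set F : ℕ → Set X := fun k =>
      if h : ∃ V, V ∈ 𝒱 ∧ idx V = k ∧ x ∈ V then Classical.choose h else ∅ with hFdef
    have hF : ∀ k ∈ {k | x ∈ W k}, F k ∈ 𝒱 ∧ idx (F k) = k ∧ x ∈ F k := by
      intro k hk
      obtain ⟨V, ⟨hV, hidxV⟩, hxV⟩ := hk
      have h : ∃ V, V ∈ 𝒱 ∧ idx V = k ∧ x ∈ V := ⟨V, hV, hidxV, hxV⟩
      have heq : F k = Classical.choose h := dif_pos h
      rw [heq]
      exact Classical.choose_spec h
    have hFinj : Set.InjOn F {k | x ∈ W k} := by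
      intro k1 h1 k2 h2 he
      rw [← (hF k1 h1).2.1, ← (hF k2 h2).2.1, he]
    have hFsub : F '' {k | x ∈ W k} ⊆ {V | V ∈ 𝒱 ∧ x ∈ V} := by
      rintro _ ⟨k, hk, rfl⟩
      exact ⟨(hF k hk).1, (hF k hk).2.2⟩
    have hbig := hVfin x
    have hVx : {V | V ∈ 𝒱 ∧ x ∈ V} = {V ∈ 𝒱 | x ∈ V} := rfl
    have hfin : {k | x ∈ W k}.Finite :=
      Set.Finite.of_finite_image ((hbig.1.subset (hVx ▸ hFsub))) hFinj
    constructor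
    · exact hfin
    · calc {k | x ∈ W k}.ncard = (F '' {k | x ∈ W k}).ncard :=
            (Set.ncard_image_of_injOn hFinj).symm
        _ ≤ {V ∈ 𝒱 | x ∈ V}.ncard := Set.ncard_le_ncard (hVx ▸ hFsub) hbig.1
        _ ≤ n + 1 := hbig.2
  -- shrink the cover
  have hWcovU : (Set.univ : Set X) ⊆ ⋃ k, W k := by
    intro x _
    obtain ⟨k, hk⟩ := hWcover x
    exact Set.mem_iUnion.mpr ⟨k, hk⟩
  obtain ⟨vv, hvvcov, hvvopen, hvvcl⟩ :=
    exists_subset_iUnion_closure_subset isClosed_univ hWopen (fun x _ => (hWfin x).1) hWcovU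
  -- Urysohn functions
  have hurys : ∀ k : ℕ, ∃ φ : C(X, ℝ), Set.EqOn φ 0 ((W k)ᶜ) ∧
      Set.EqOn φ 1 (closure (vv k)) ∧ ∀ x, φ x ∈ Set.Icc (0:ℝ) 1 := by
    intro k
    exact exists_continuous_zero_one_of_isClosed (isClosed_compl_iff.mpr (hWopen k))
      isClosed_closure
      (Set.disjoint_left.mpr (fun a ha hb => ha (hvvcl k hb)))
  choose φ hφ0 hφ1 hφmem using hurys
  -- the general position points
  set rr : ℕ → ℝ := fun k => qk k / 8 with hrr
  have hrrpos : ∀ k, 0 < rr k := by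
    intro k; have := hqkpos k; rw [hrr]; dsimp only; linarith
  set y : ℕ → EuclideanSpace ℝ (Fin (n+1)) := gp n dk rr hrrpos with hy
  have hydist : ∀ k, dist (y k) (dk k) < qk k / 8 := fun k => (gp_spec n dk rr hrrpos k).1
  -- coefficients
  set a : ℕ → ℝ := fun k => (1/2:ℝ)^k * (1 + ‖y k‖)⁻¹ with ha
  have hapos : ∀ k, 0 < a k := by
    intro k; rw [ha]; dsimp only; positivity
  have haobnd : ∀ k, a k ≤ (1/2:ℝ)^k := by
    intro k; rw [ha]; dsimp only
    have h1 : (1 + ‖y k‖)⁻¹ ≤ 1 := by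
      rw [inv_le_one_iff₀]; right; linarith [norm_nonneg (y k)]
    calc (1/2:ℝ)^k * (1 + ‖y k‖)⁻¹ ≤ (1/2:ℝ)^k * 1 :=
          mul_le_mul_of_nonneg_left h1 (by positivity)
      _ = (1/2:ℝ)^k := mul_one _
  have habnd : ∀ k, a k * ‖y k‖ ≤ (1/2:ℝ)^k := by
    intro k; rw [ha]; dsimp only
    rw [mul_assoc]
    apply mul_le_of_le_one_right (by positivity)
    rw [inv_mul_le_iff₀ (by positivity : (0:ℝ) < 1 + ‖y k‖)]
    linarith [norm_nonneg (y k)]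
  have hφ01 : ∀ k x, 0 ≤ φ k x ∧ φ k x ≤ 1 := fun k x => ⟨(hφmem k x).1, (hφmem k x).2⟩
  have hφW : ∀ k (x : X), x ∉ W k → φ k x = 0 := by
    intro k x hx
    have := hφ0 k (by simpa using hx)
    simpa using this
  -- the sums
  set sfun : X → ℝ := fun x => ∑' k, a k * φ k x with hsfun
  set Nfun : X → EuclideanSpace ℝ (Fin (n+1)) := fun x => ∑' k, (a k * φ k x) • y k with hNfun
  have hsum12 : Summable (fun k : ℕ => (1/2:ℝ)^k) := summable_geometric_two
  have hscont : Continuous sfun := by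
    rw [hsfun]
    apply continuous_tsum (fun k => continuous_const.mul (φ k).continuous) hsum12
    intro k x
    show ‖a k * φ k x‖ ≤ (1/2:ℝ)^k
    rw [Real.norm_eq_abs, abs_of_nonneg (mul_nonneg (hapos k).le (hφ01 k x).1)]
    calc a k * φ k x ≤ a k * 1 := mul_le_mul_of_nonneg_left (hφ01 k x).2 (hapos k).le
      _ = a k := mul_one _
      _ ≤ _ := haobnd k
  have hNcont : Continuous Nfun := by
    rw [hNfun]
    apply continuous_tsum
      (fun k => (continuous_const.mul (φ k).continuous).smul continuous_const) hsum12
    intro k x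
    show ‖(a k * φ k x) • y k‖ ≤ (1/2:ℝ)^k
    rw [norm_smul, Real.norm_eq_abs, abs_of_nonneg (mul_nonneg (hapos k).le (hφ01 k x).1)]
    calc a k * φ k x * ‖y k‖ ≤ a k * ‖y k‖ :=
          mul_le_mul_of_nonneg_right
            (by calc a k * φ k x ≤ a k * 1 := mul_le_mul_of_nonneg_left (hφ01 k x).2 (hapos k).le
                  _ = a k := mul_one _) (norm_nonneg _)
      _ ≤ (1/2:ℝ)^k := habnd k
  -- pointwise analysis
  have hpoint : ∀ x : X, 0 < sfun x ∧ ‖(sfun x)⁻¹ • Nfun x - f x‖ < ε x ∧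
      (sfun x)⁻¹ • Nfun x ≠ 0 := by
    intro x
    set Tx : Finset ℕ := (hWfin x).1.toFinset with hTxdef
    have hTx : ∀ k, k ∈ Tx ↔ x ∈ W k := by
      intro k; rw [hTxdef, Set.Finite.mem_toFinset]; rfl
    have hTxcard : Tx.card ≤ n + 1 := by
      have h := (hWfin x).2
      rwa [Set.ncard_eq_toFinset_card _ (hWfin x).1] at h
    have hzero : ∀ k ∉ Tx, a k * φ k x = 0 := by
      intro k hk
      rw [hφW k x (fun hc => hk ((hTx k).mpr hc)), mul_zero]
    have hseq : sfun x = ∑ k ∈ Tx, a k * φ k x := tsum_eq_sum hzero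
    have hNeq : Nfun x = ∑ k ∈ Tx, (a k * φ k x) • y k :=
      tsum_eq_sum (fun k hk => by rw [hzero k hk, zero_smul])
    obtain ⟨k0, hk0⟩ := Set.mem_iUnion.mp (hvvcov (Set.mem_univ x))
    have hk0W : x ∈ W k0 := hvvcl k0 (subset_closure hk0)
    have hφk0 : φ k0 x = 1 := by
      have := hφ1 k0 (subset_closure hk0)
      simpa using this
    have hk0T : k0 ∈ Tx := (hTx k0).mpr hk0W
    have hnn : ∀ k ∈ Tx, 0 ≤ a k * φ k x :=
      fun k _ => mul_nonneg (hapos k).le (hφ01 k x).1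
    have hspos : 0 < sfun x := by
      rw [hseq]
      apply Finset.sum_pos' hnn
      exact ⟨k0, hk0T, by rw [hφk0, mul_one]; exact hapos k0⟩
    have hclose : ∀ k ∈ Tx, ‖y k - f x‖ < ε x := by
      intro k hk
      have hxU : x ∈ U k := hWsub k ((hTx k).mp hk)
      have h1 : ‖f x - dk k‖ < qk k / 8 := hxU.1
      have h2 : qk k < ε x := hxU.2
      have h3 : ‖y k - dk k‖ < qk k / 8 := by rw [← dist_eq_norm]; exact hydist k
      have h1' : ‖dk k - f x‖ < qk k / 8 := by rwa [norm_sub_rev] at h1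
      calc ‖y k - f x‖ = ‖(y k - dk k) + (dk k - f x)‖ := by
            congr 1; abel
        _ ≤ ‖y k - dk k‖ + ‖dk k - f x‖ := norm_add_le _ _
        _ < qk k / 8 + qk k / 8 := add_lt_add h3 h1'
        _ < ε x := by linarith [hqkpos k]
    refine ⟨hspos, ?_, ?_⟩
    · -- norm estimate
      have e1 : (sfun x)⁻¹ • Nfun x - f x = (sfun x)⁻¹ • (Nfun x - sfun x • f x) := by
        rw [smul_sub, smul_smul, inv_mul_cancel₀ hspos.ne', one_smul]
      have e2 : Nfun x - sfun x • f x = ∑ k ∈ Tx, (a k * φ k x) • (y k - f x) := by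
        rw [hNeq, hseq, Finset.sum_smul, ← Finset.sum_sub_distrib]
        apply Finset.sum_congr rfl
        intro k _
        rw [smul_sub]
      rw [e1, e2, norm_smul, Real.norm_eq_abs, abs_of_pos (inv_pos.mpr hspos)]
      have h4 : ‖∑ k ∈ Tx, (a k * φ k x) • (y k - f x)‖ ≤
          ∑ k ∈ Tx, (a k * φ k x) * ‖y k - f x‖ := by
        refine (norm_sum_le _ _).trans ?_
        apply le_of_eq
        apply Finset.sum_congr rfl
        intro k hk
        rw [norm_smul, Real.norm_eq_abs, abs_of_nonneg (hnn k hk)]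
      have h5 : ∑ k ∈ Tx, (a k * φ k x) * ‖y k - f x‖ <
          ∑ k ∈ Tx, (a k * φ k x) * ε x := by
        apply Finset.sum_lt_sum
        · intro k hk
          apply mul_le_mul_of_nonneg_left (hclose k hk).le (hnn k hk)
        · refine ⟨k0, hk0T, ?_⟩
          apply mul_lt_mul_of_pos_left (hclose k0 hk0T)
          rw [hφk0, mul_one]; exact hapos k0
      have h6 : ∑ k ∈ Tx, (a k * φ k x) * ε x = sfun x * ε x := by
        rw [← Finset.sum_mul, ← hseq]
      calc (sfun x)⁻¹ * ‖∑ k ∈ Tx, (a k * φ k x) • (y k - f x)‖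
          ≤ (sfun x)⁻¹ * ∑ k ∈ Tx, (a k * φ k x) * ‖y k - f x‖ :=
            mul_le_mul_of_nonneg_left h4 (inv_pos.mpr hspos).le
        _ < (sfun x)⁻¹ * (sfun x * ε x) := by
            rw [← h6]; exact mul_lt_mul_of_pos_left h5 (inv_pos.mpr hspos)
        _ = ε x := by rw [← mul_assoc, inv_mul_cancel₀ hspos.ne', one_mul]
    · -- nonvanishing
      intro h0
      have hN0 : Nfun x = 0 := by
        have := smul_eq_zero.mp h0
        rcases this with h | h
        · exact absurd h (inv_ne_zero hspos.ne')
        · exact h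
      rw [hNeq] at hN0
      have h7 : a k0 * φ k0 x = 0 := gp_indep n dk rr hrrpos Tx.card Tx rfl hTxcard
        (fun k => a k * φ k x) hN0 k0 hk0T
      rw [hφk0, mul_one] at h7
      exact absurd h7 (hapos k0).ne'
  exact ⟨fun x => (sfun x)⁻¹ • Nfun x,
    ((hscont.inv₀ (fun x => (hpoint x).1.ne')).smul hNcont),
    fun x => ⟨(hpoint x).2.1, (hpoint x).2.2⟩⟩
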